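/- Landscape uncertainty principle: Let Γ be a locally finite graph, A ⊆ 𝕍 a finite nonempty subset, μ_{xy} = μ_{yx} ∈ [0,1] symmetric bond weights for x∼y, and V_x ≥ 0 potentials, and let H^A be the Dirichlet restriction. Suppose u: A → ℝ satisfies u(x) > 0 for all x ∈ A and H^A u(x) = 1 for all x ∈ A. Then for every f: A → ℝ: Σ_{x∈A} f(x)·(H^A f)(x) = (1/2)·Σ_{x,y∈A: x∼y} μ_{xy}·u(x)·u(y)·(f(x)/u(x) − f(y)/u(y))² + Σ_{x∈A} f(x)²/u(x), where the double sum ranges over all ordered pairs (x,y) of adjacent vertices of A. -/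

import Mathlib

open scoped BigOperators

namespace LandscapeGraph

variable {V : Type*}

/-- Ball of real radius `r` with respect to the shortest-path graph metric. -/
def gball (G : SimpleGraph V) (x : V) (r : ℝ) : Set V :=
  {y | G.Reachable x y ∧ (G.dist x y : ℝ) ≤ r}

/-- The degree of a vertex, as a real number. -/
noncomputable def ndeg (G : SimpleGraph V) (x : V) : ℝ := ((G.neighborSet x).ncard : ℝ)

/-- The graph Laplacian `Δf(x) = Σ_{y∼x} (f(y) - f(x))`. -/
noncomputable def lap (G : SimpleGraph V) (f : V → ℝ) (x : V) : ℝ :=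
  ∑ᶠ y ∈ G.neighborSet x, (f y - f x)

/-- Volume control (Ahlfors `α`-regularity) with parameters `(α, cL, cU)`. -/
def VolCtrl (G : SimpleGraph V) (α cL cU : ℝ) : Prop :=
  ∀ x : V, ∀ r : ℝ, 1 ≤ r →
    cL * r ^ α ≤ ((gball G x r).ncard : ℝ) ∧ ((gball G x r).ncard : ℝ) ≤ cU * r ^ α

/-- Degree-weighted average of `f` over a set `S`. -/
noncomputable def wavg (G : SimpleGraph V) (S : Set V) (f : V → ℝ) : ℝ :=
  (∑ᶠ z ∈ S, f z * ndeg G z) / ∑ᶠ z ∈ S, ndeg G z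

/-- The Dirichlet-type energy `Σ_{z,w∈S, z∼w} (f z - f w)²` (over ordered pairs). -/
noncomputable def pairEnergy (G : SimpleGraph V) (S : Set V) (f : V → ℝ) : ℝ :=
  ∑ᶠ z ∈ S, ∑ᶠ w ∈ {w ∈ S | G.Adj z w}, (f z - f w) ^ 2

/-- The weak Poincaré inequality with constants `(CP, lam)`. -/
def WeakPI (G : SimpleGraph V) (CP lam : ℝ) : Prop :=
  ∀ x : V, ∀ r : ℝ, 1 ≤ r → ∀ f : V → ℝ,
    (∑ᶠ z ∈ gball G x r, (f z - wavg G (gball G x r) f) ^ 2) ≤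
      CP * r ^ 2 * pairEnergy G (gball G x (lam * r)) f

/-- The Dirichlet restriction `H^A` of the Jacobi operator, acting on functions. -/
noncomputable def HAop (G : SimpleGraph V) (μ : V → V → ℝ) (Vpot : V → ℝ) (A : Set V)
    (f : V → ℝ) (x : V) : ℝ :=
  ndeg G x * f x - (∑ᶠ y ∈ {y ∈ A | G.Adj x y}, μ x y * f y) + Vpot x * f x

/-- Symmetric bond weights with values in `[0,1]`. -/
def BondWeights (G : SimpleGraph V) (μ : V → V → ℝ) : Prop :=
  ∀ x y, G.Adj x y → μ x y = μ y x ∧ 0 ≤ μ x y ∧ μ x y ≤ 1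

/-- `u` is the landscape function of `H^A`: positive on `A` and solving `H^A u = 1` on `A`. -/
def IsLandscape (G : SimpleGraph V) (μ : V → V → ℝ) (Vpot : V → ℝ) (A : Finset V)
    (u : V → ℝ) : Prop :=
  (∀ x ∈ A, 0 < u x) ∧ ∀ x ∈ A, HAop G μ Vpot (↑A) u x = 1

open Classical in
/-- The Dirichlet restriction `H^A` as a matrix indexed by `A`. -/
noncomputable def HAmat (G : SimpleGraph V) (μ : V → V → ℝ) (Vpot : V → ℝ) (A : Finset V) :
    Matrix A A ℝ := fun x y =>
  (if (x : V) = (y : V) then ndeg G (x : V) + Vpot (x : V) else 0) -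
    (if G.Adj (x : V) (y : V) then μ (x : V) (y : V) else 0)

open Classical in
/-- The integrated density of states: number of eigenvalues `≤ E` (with multiplicity),
divided by `|A|`. -/
noncomputable def NA {A : Finset V} {M : Matrix A A ℝ} (hM : M.IsHermitian) (E : ℝ) : ℝ :=
  ((Finset.univ.filter fun i => hM.eigenvalues i ≤ E).card : ℝ) / (A.card : ℝ)

/-- `Z` is the set of centers of a covering of `𝕍` by balls of radius `R`
with finite overlap constant `b`. -/
def IsCover (G : SimpleGraph V) (Z : Set V) (R b : ℝ) : Prop :=
  (∀ y : V, ∃ z ∈ Z, y ∈ gball G z R) ∧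
    ∀ y : V, (({z ∈ Z | y ∈ gball G z R}).ncard : ℝ) ≤ b

/-- The landscape counting function `N_u^{𝒫,A}(E)` for the cover with centers `Z` and radius `R`:
the number of balls `B` of the cover with `min_{x ∈ B∩A} 1/u(x) ≤ E`, divided by `|A|`. -/
noncomputable def Nu (G : SimpleGraph V) (u : V → ℝ) (A : Finset V) (Z : Set V) (R E : ℝ) : ℝ :=
  (({z ∈ Z | ∃ x ∈ A, x ∈ gball G z R ∧ 1 / u x ≤ E}).ncard : ℝ) / (A.card : ℝ)

/-- The diameter of a finite set of vertices in the graph metric. -/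
noncomputable def diamA (G : SimpleGraph V) (A : Finset V) : ℝ :=
  ((A.sup fun x => A.sup fun y => G.dist x y : ℕ) : ℝ)

/-- `A` has sufficient overlap with balls, with constant `cA`. -/
def SuffOverlap (G : SimpleGraph V) (A : Finset V) (α cA : ℝ) : Prop :=
  ∀ x ∈ A, ∀ r : ℝ, 1 ≤ r → r ≤ 4 * diamA G A →
    cA * r ^ α ≤ (((↑A : Set V) ∩ gball G x r).ncard : ℝ)

/-- The Dirichlet Laplacian `-Δ^B` of a region `B`, acting on functions:
`(-Δ^B f)(x) = deg(x) f(x) - Σ_{y ∈ B, y ∼ x} f(y)`. -/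
noncomputable def negDirLap (G : SimpleGraph V) (B : Set V) (f : V → ℝ) (x : V) : ℝ :=
  ndeg G x * f x - ∑ᶠ y ∈ {y ∈ B | G.Adj x y}, f y

/-- Exterior (vertex) boundary of a set. -/
def extBoundary (G : SimpleGraph V) (S : Set V) : Set V :=
  {x | x ∉ S ∧ ∃ y ∈ S, G.Adj x y}

/-- Ball with respect to an abstract metric `d`. -/
def dball (d : V → V → ℝ) (ξ : V) (R : ℝ) : Set V := {y | d ξ y ≤ R}

/-- The harmonic weight assumption: a metric `d` strongly equivalent (constant `c`) to the
graph metric, together with harmonic weights `h ξ R : B^d(ξ,R) → [0,1]` satisfying the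
submean property for subharmonic functions (with equality for harmonic ones), and a
uniform lower bound `c' / |B^d(ξ,R)|` off `bad' sets `X ξ R` of asymptotically
negligible proportion. -/
structure HarmonicWeight (G : SimpleGraph V) (d : V → V → ℝ) (h : V → ℝ → V → ℝ)
    (X : V → ℝ → Set V) (c c' : ℝ) : Prop where
  c_one : 1 ≤ c
  c'_pos : 0 < c'
  d_self : ∀ x, d x x = 0
  d_eq_zero : ∀ x y, d x y = 0 → x = y
  d_symm : ∀ x y, d x y = d y x
  d_triangle : ∀ x y z, d x z ≤ d x y + d y z
  d_lower : ∀ x y, c⁻¹ * (G.dist x y : ℝ) ≤ d x y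
  d_upper : ∀ x y, d x y ≤ c * (G.dist x y : ℝ)
  h_mem : ∀ ξ (R : ℝ) y, y ∈ dball d ξ R → h ξ R y ∈ Set.Icc (0 : ℝ) 1
  submean : ∀ ξ (R : ℝ), 0 < R → ∀ f : V → ℝ,
    (∀ x ∈ dball d ξ R ∪ extBoundary G (dball d ξ R), 0 ≤ lap G f x) →
    f ξ ≤ ∑ᶠ y ∈ dball d ξ R, h ξ R y * f y
  harm_eq : ∀ ξ (R : ℝ), 0 < R → ∀ f : V → ℝ,
    (∀ x ∈ dball d ξ R ∪ extBoundary G (dball d ξ R), lap G f x = 0) →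
    f ξ = ∑ᶠ y ∈ dball d ξ R, h ξ R y * f y
  X_subset : ∀ ξ (R : ℝ), X ξ R ⊆ dball d ξ R
  h_lower : ∀ ξ (R : ℝ), ∀ y ∈ dball d ξ R \ X ξ R,
    c' / ((dball d ξ R).ncard : ℝ) ≤ h ξ R y
  X_small : ∀ ε : ℝ, 0 < ε → ∃ R₀ : ℝ, ∀ R : ℝ, R₀ ≤ R → ∀ ξ : V,
    ((X ξ R).ncard : ℝ) ≤ ε * ((dball d ξ R).ncard : ℝ)



/-- **Landscape uncertainty principle**: for the landscape function `u` of `H^A`,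
`⟨f, H^A f⟩ = ½ Σ_{x,y∈A, x∼y} μ_{xy} u(x) u(y) (f(x)/u(x) - f(y)/u(y))² + Σ_{x∈A} f(x)²/u(x)`. -/
theorem landscape_uncertainty_principle
    {V : Type*}
    (G : SimpleGraph V) (hlf : ∀ x : V, (G.neighborSet x).Finite)
    (A : Finset V) (hA : A.Nonempty)
    (μ : V → V → ℝ) (Vpot : V → ℝ) (hμ : BondWeights G μ) (hV : ∀ x, 0 ≤ Vpot x)
    (u : V → ℝ) (hu : IsLandscape G μ Vpot A u) :
    ∀ f : V → ℝ,
      (∑ᶠ x ∈ (↑A : Set V), f x * HAop G μ Vpot (↑A) f x) =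
        (1 / 2) *
            (∑ᶠ x ∈ (↑A : Set V), ∑ᶠ y ∈ {y ∈ (↑A : Set V) | G.Adj x y},
              μ x y * u x * u y * (f x / u x - f y / u y) ^ 2) +
          ∑ᶠ x ∈ (↑A : Set V), f x ^ 2 / u x := by
  classical
  intro f
  have hset : ∀ x : V, {y ∈ (↑A : Set V) | G.Adj x y}
      = ↑(A.filter fun y => G.Adj x y) := by
    intro x; ext y; simp [Set.mem_setOf_eq]
  have hu0 : ∀ x ∈ A, u x ≠ 0 := fun x hx => ne_of_gt (hu.1 x hx)
  have hland : ∀ x ∈ A, ndeg G x * u x + Vpot x * u x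
      = 1 + ∑ y ∈ A, (if G.Adj x y then μ x y * u y else 0) := by
    intro x hx
    have h := hu.2 x hx
    rw [HAop, hset x, finsum_mem_coe_finset, Finset.sum_filter] at h
    linarith
  simp only [HAop, hset, finsum_mem_coe_finset, Finset.sum_filter]
  set D1 := ∑ x ∈ A, ∑ y ∈ A, (if G.Adj x y then μ x y * u y * f x ^ 2 / u x else 0)
    with hD1
  set D2 := ∑ x ∈ A, ∑ y ∈ A, (if G.Adj x y then μ x y * (f x * f y) else 0) with hD2
  set D3 := ∑ x ∈ A, ∑ y ∈ A, (if G.Adj x y then μ x y * u x * f y ^ 2 / u y else 0)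
    with hD3
  have key : ∀ x ∈ A,
      f x * (ndeg G x * f x - (∑ y ∈ A, if G.Adj x y then μ x y * f y else 0)
        + Vpot x * f x)
      = f x ^ 2 / u x
        + (∑ y ∈ A, if G.Adj x y then μ x y * u y * f x ^ 2 / u x else 0)
        - ∑ y ∈ A, (if G.Adj x y then μ x y * (f x * f y) else 0) := by
    intro x hx
    have h1 := hland x hx
    have h2 : u x ≠ 0 := hu0 x hx
    have e1 : f x * (∑ y ∈ A, if G.Adj x y then μ x y * f y else 0)
        = ∑ y ∈ A, (if G.Adj x y then μ x y * (f x * f y) else 0) := by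
      rw [Finset.mul_sum]
      refine Finset.sum_congr rfl fun y _ => ?_
      split <;> ring
    have e2 : (∑ y ∈ A, if G.Adj x y then μ x y * u y else 0) * (f x ^ 2 / u x)
        = ∑ y ∈ A, (if G.Adj x y then μ x y * u y * f x ^ 2 / u x else 0) := by
      rw [Finset.sum_mul]
      refine Finset.sum_congr rfl fun y _ => ?_
      split <;> ring
    have e3 : (ndeg G x + Vpot x) * f x ^ 2
        = (1 + ∑ y ∈ A, if G.Adj x y then μ x y * u y else 0) * (f x ^ 2 / u x) := by
      rw [← h1]; field_simp
    calc f x * (ndeg G x * f x - (∑ y ∈ A, if G.Adj x y then μ x y * f y else 0)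
          + Vpot x * f x)
        = (ndeg G x + Vpot x) * f x ^ 2
            - f x * (∑ y ∈ A, if G.Adj x y then μ x y * f y else 0) := by ring
      _ = (1 + ∑ y ∈ A, if G.Adj x y then μ x y * u y else 0) * (f x ^ 2 / u x)
            - ∑ y ∈ A, (if G.Adj x y then μ x y * (f x * f y) else 0) := by
          rw [e3, e1]
      _ = f x ^ 2 / u x
            + (∑ y ∈ A, if G.Adj x y then μ x y * u y else 0) * (f x ^ 2 / u x)
            - ∑ y ∈ A, (if G.Adj x y then μ x y * (f x * f y) else 0) := by ring
      _ = _ := by rw [e2]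
  have hL : (∑ x ∈ A, f x * (ndeg G x * f x
        - (∑ y ∈ A, if G.Adj x y then μ x y * f y else 0) + Vpot x * f x))
      = (∑ x ∈ A, f x ^ 2 / u x) + D1 - D2 := by
    rw [Finset.sum_congr rfl key, hD1, hD2]
    rw [Finset.sum_sub_distrib, Finset.sum_add_distrib]
  have hsymm : D3 = D1 := by
    rw [hD3, Finset.sum_comm, hD1]
    refine Finset.sum_congr rfl fun a _ => Finset.sum_congr rfl fun b _ => ?_
    by_cases h : G.Adj a b
    · rw [if_pos h.symm, if_pos h, (hμ b a h.symm).1]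
    · rw [if_neg (fun hh => h hh.symm), if_neg h]
  have hterm : ∀ x ∈ A, ∀ y ∈ A,
      (if G.Adj x y then μ x y * u x * u y * (f x / u x - f y / u y) ^ 2 else 0)
      = (if G.Adj x y then μ x y * u y * f x ^ 2 / u x else 0)
        + (if G.Adj x y then μ x y * u x * f y ^ 2 / u y else 0)
        - 2 * (if G.Adj x y then μ x y * (f x * f y) else 0) := by
    intro x hx y hy
    by_cases h : G.Adj x y
    · simp only [if_pos h]
      have hx0 := hu0 x hx
      have hy0 := hu0 y hy
      field_simp
      ring
    · simp [h]
  have hR : (∑ x ∈ A, ∑ y ∈ A,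
        (if G.Adj x y then μ x y * u x * u y * (f x / u x - f y / u y) ^ 2 else 0))
      = D1 + D3 - 2 * D2 := by
    rw [Finset.sum_congr rfl fun x hx =>
      Finset.sum_congr rfl fun y hy => hterm x hx y hy]
    rw [hD1, hD3, hD2]
    simp only [Finset.sum_sub_distrib, Finset.sum_add_distrib, Finset.mul_sum]
  rw [hL, hR, hsymm]
  ring


end LandscapeGraph
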